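/- Let y_ζ minimize the scalarized functional J_ζ(y) = ∫_a^b L_ζ(t,y,ẏ) dt over 𝒳 = {y ∈ C¹([a,b];ℝⁿ) : y(a)=A, y(b)=B}, where L_ζ = ζ·L with L of class C¹. Let M ⊆ 𝒳 be an infimizer of J̄ containing y_ζ, and define φ_{ζ,M}(v) = inf_{y∈M} ζ·J(y+v) for v ∈ C¹₀([a,b];ℝⁿ). Then φ_{ζ,M} is Fréchet differentiable at 0 with φ'_{ζ,M}(0)(v) = ∫_a^b [D_y L_ζ(t, y_ζ, ẏ_ζ)·v + D_p L_ζ(t, y_ζ, ẏ_ζ)·v̇] dt, and this derivative is identically zero. -/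

import Mathlib

open Pointwise MeasureTheory

lemma partial_fderiv_left {E G : Type*} [NormedAddCommGroup E] [NormedSpace ℝ E]
    [NormedAddCommGroup G] [NormedSpace ℝ G]
    (F : ℝ × E × E → G) (hF : Differentiable ℝ F) (t : ℝ) (y p u : E) :
    fderiv ℝ (fun y' => F (t, y', p)) y u = fderiv ℝ F (t, y, p) (0, u, 0) := by
  have h1 : HasFDerivAt (fun y' : E => ((t, y', p) : ℝ × E × E))
      (ContinuousLinearMap.prod 0 (ContinuousLinearMap.prod (ContinuousLinearMap.id ℝ E) 0)) y :=
    (hasFDerivAt_const t y).prodMk ((hasFDerivAt_id y).prodMk (hasFDerivAt_const p y))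
  have h2 : HasFDerivAt (fun y' => F (t, y', p))
      ((fderiv ℝ F (t, y, p)).comp
        (ContinuousLinearMap.prod 0 (ContinuousLinearMap.prod (ContinuousLinearMap.id ℝ E) 0))) y :=
    ((hF (t, y, p)).hasFDerivAt.comp y h1)
  rw [h2.fderiv]
  simp

lemma partial_fderiv_right {E G : Type*} [NormedAddCommGroup E] [NormedSpace ℝ E]
    [NormedAddCommGroup G] [NormedSpace ℝ G]
    (F : ℝ × E × E → G) (hF : Differentiable ℝ F) (t : ℝ) (y p u : E) :
    fderiv ℝ (fun p' => F (t, y, p')) p u = fderiv ℝ F (t, y, p) (0, 0, u) := by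
  have h1 : HasFDerivAt (fun p' : E => ((t, y, p') : ℝ × E × E))
      (ContinuousLinearMap.prod 0 (ContinuousLinearMap.prod 0 (ContinuousLinearMap.id ℝ E))) p :=
    (hasFDerivAt_const t p).prodMk ((hasFDerivAt_const y p).prodMk (hasFDerivAt_id p))
  have h2 : HasFDerivAt (fun p' => F (t, y, p'))
      ((fderiv ℝ F (t, y, p)).comp
        (ContinuousLinearMap.prod 0 (ContinuousLinearMap.prod 0 (ContinuousLinearMap.id ℝ E)))) p :=
    ((hF (t, y, p)).hasFDerivAt.comp p h1)
  rw [h2.fderiv]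
  simp

lemma keyEst {E : Type*} [NormedAddCommGroup E] [NormedSpace ℝ E] [ProperSpace E]
    (a b : ℝ) (hab : a < b) (F : ℝ × E × E → ℝ) (hF : ContDiff ℝ 1 F)
    (y : ℝ → E) (hy : ContDiff ℝ 1 y) :
    ∀ ε > 0, ∃ δ > 0, ∀ v : ℝ → E, ContDiff ℝ 1 v → ∀ N : ℝ, N < δ →
      (∀ t ∈ Set.Icc a b, ‖v t‖ ≤ N ∧ ‖deriv v t‖ ≤ N) →
      |(∫ t in a..b, F (t, y t + v t, deriv y t + deriv v t)) -
       (∫ t in a..b, F (t, y t, deriv y t)) -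
       ∫ t in a..b, (fderiv ℝ F (t, y t, deriv y t)) (0, v t, deriv v t)| ≤ ε * N := by
  intro ε hε
  have hba : (0:ℝ) < b - a := by linarith
  have hε' : 0 < ε / (b - a) := div_pos hε hba
  have hDFc : Continuous (fderiv ℝ F) := hF.continuous_fderiv one_ne_zero
  have hyc : Continuous y := hy.continuous
  have hy' : Continuous (deriv y) := hy.continuous_deriv le_rfl
  set g : ℝ × E × E → ℝ × E × E := fun q => (q.1, y q.1 + q.2.1, deriv y q.1 + q.2.2) with hg
  have hgc : Continuous g := by
    apply Continuous.prodMk continuous_fst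
    apply Continuous.prodMk
    · exact (hyc.comp continuous_fst).add (continuous_fst.comp continuous_snd)
    · exact (hy'.comp continuous_fst).add (continuous_snd.comp continuous_snd)
  set K : Set (ℝ × E × E) :=
    g '' (Set.Icc a b ×ˢ (Metric.closedBall (0:E) 1 ×ˢ Metric.closedBall (0:E) 1)) with hKdef
  have hK : IsCompact K :=
    ((isCompact_Icc.prod ((isCompact_closedBall _ _).prod (isCompact_closedBall _ _)))).image hgc
  have hUC := (Metric.uniformContinuousOn_iff).1
    (hK.uniformContinuousOn_of_continuous hDFc.continuousOn) (ε / (b - a)) hε'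
  obtain ⟨δ₀, hδ₀, hδ₀'⟩ := hUC
  refine ⟨min δ₀ 1, lt_min hδ₀ one_pos, ?_⟩
  intro v hv N hN hbd
  have hvc : Continuous v := hv.continuous
  have hv' : Continuous (deriv v) := hv.continuous_deriv le_rfl
  have hNnn : 0 ≤ N := le_trans (norm_nonneg _) (hbd a ⟨le_rfl, hab.le⟩).1
  have hN1 : N < 1 := lt_of_lt_of_le hN (min_le_right _ _)
  have hNδ : N < δ₀ := lt_of_lt_of_le hN (min_le_left _ _)
  have hmem : ∀ t ∈ Set.Icc a b, ∀ u w : E, ‖u‖ ≤ 1 → ‖w‖ ≤ 1 →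
      ((t, y t + u, deriv y t + w) : ℝ × E × E) ∈ K := by
    intro t ht u w hu hw
    exact ⟨(t, u, w), ⟨ht, mem_closedBall_zero_iff.2 hu, mem_closedBall_zero_iff.2 hw⟩, rfl⟩
  have hpt : ∀ t ∈ Set.Icc a b,
      |F (t, y t + v t, deriv y t + deriv v t) - F (t, y t, deriv y t) -
        (fderiv ℝ F (t, y t, deriv y t)) (0, v t, deriv v t)| ≤ (ε / (b - a)) * N := by
    intro t ht
    set x : ℝ × E × E := (t, y t, deriv y t) with hx
    set x' : ℝ × E × E := (t, y t + v t, deriv y t + deriv v t) with hx'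
    have hsub : x' - x = ((0 : ℝ), v t, deriv v t) := by
      simp [hx, hx', Prod.ext_iff]
    have hxn : ‖x' - x‖ ≤ N := by
      rw [hsub, Prod.norm_def, Prod.norm_def]
      simp only [norm_zero]
      exact max_le hNnn (max_le (hbd t ht).1 (hbd t ht).2)
    have hxK : x ∈ K := by
      have := hmem t ht 0 0 (by simp) (by simp)
      simpa using this
    have hsegK : ∀ z ∈ segment ℝ x x', z ∈ K ∧ ‖z - x‖ ≤ N := by
      intro z hz
      rw [segment_eq_image' ℝ x x'] at hz
      obtain ⟨c, hc, rfl⟩ := hz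
      have hcn : ‖c‖ ≤ 1 := by rw [Real.norm_eq_abs, abs_of_nonneg hc.1]; exact hc.2
      constructor
      · show x + c • (x' - x) ∈ K
        rw [hsub]
        have h1 : x + c • (((0 : ℝ), v t, deriv v t) : ℝ × E × E)
            = (t, y t + c • v t, deriv y t + c • deriv v t) := by
          simp [hx, Prod.ext_iff]
        rw [h1]
        apply hmem t ht
        · rw [norm_smul]
          calc ‖c‖ * ‖v t‖ ≤ 1 * N :=
                mul_le_mul hcn (hbd t ht).1 (norm_nonneg _) zero_le_one
            _ ≤ 1 := by linarith
        · rw [norm_smul]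
          calc ‖c‖ * ‖deriv v t‖ ≤ 1 * N :=
                mul_le_mul hcn (hbd t ht).2 (norm_nonneg _) zero_le_one
            _ ≤ 1 := by linarith
      · show ‖x + c • (x' - x) - x‖ ≤ N
        rw [add_sub_cancel_left, norm_smul]
        calc ‖c‖ * ‖x' - x‖ ≤ 1 * N :=
              mul_le_mul hcn hxn (norm_nonneg _) zero_le_one
          _ = N := one_mul N
    have hbound : ∀ z ∈ segment ℝ x x', ‖fderiv ℝ F z - fderiv ℝ F x‖ ≤ ε / (b - a) := by
      intro z hz
      obtain ⟨hzK, hzn⟩ := hsegK z hz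
      have hd : dist z x < δ₀ := by
        rw [dist_eq_norm]; exact lt_of_le_of_lt hzn hNδ
      have := hδ₀' z hzK x hxK hd
      rw [dist_eq_norm] at this
      exact this.le
    have hder : ∀ z ∈ segment ℝ x x',
        HasFDerivWithinAt F (fderiv ℝ F z) (segment ℝ x x') z := fun z _ =>
      ((hF.differentiable one_ne_zero) z).hasFDerivAt.hasFDerivWithinAt
    have hfin := Convex.norm_image_sub_le_of_norm_hasFDerivWithin_le' hder hbound
      (convex_segment _ _) (left_mem_segment ℝ x x') (right_mem_segment ℝ x x')
    rw [hsub] at hfin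
    rw [← Real.norm_eq_abs]
    calc ‖F x' - F x - (fderiv ℝ F x) (0, v t, deriv v t)‖
        ≤ (ε / (b - a)) * ‖(((0:ℝ), v t, deriv v t) : ℝ × E × E)‖ := hfin
      _ ≤ (ε / (b - a)) * N := by
          apply mul_le_mul_of_nonneg_left _ hε'.le
          rw [← hsub]; exact hxn
  -- integrability
  have hΓc : Continuous fun t => ((t, y t, deriv y t) : ℝ × E × E) :=
    continuous_id.prodMk (hyc.prodMk hy')
  have hΓ'c : Continuous fun t => ((t, y t + v t, deriv y t + deriv v t) : ℝ × E × E) :=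
    continuous_id.prodMk ((hyc.add hvc).prodMk (hy'.add hv'))
  have hi1 : IntervalIntegrable (fun t => F (t, y t + v t, deriv y t + deriv v t)) volume a b :=
    (hF.continuous.comp hΓ'c).intervalIntegrable a b
  have hi2 : IntervalIntegrable (fun t => F (t, y t, deriv y t)) volume a b :=
    (hF.continuous.comp hΓc).intervalIntegrable a b
  have hi3 : IntervalIntegrable
      (fun t => (fderiv ℝ F (t, y t, deriv y t)) (0, v t, deriv v t)) volume a b := by
    apply Continuous.intervalIntegrable
    exact (hDFc.comp hΓc).clm_apply
      (continuous_const.prodMk (hvc.prodMk hv'))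
  rw [← intervalIntegral.integral_sub hi1 hi2, ← intervalIntegral.integral_sub (hi1.sub hi2) hi3]
  rw [← Real.norm_eq_abs]
  have hle := intervalIntegral.norm_integral_le_of_norm_le_const (C := (ε / (b - a)) * N)
    (f := fun t => F (t, y t + v t, deriv y t + deriv v t) - F (t, y t, deriv y t) -
      (fderiv ℝ F (t, y t, deriv y t)) (0, v t, deriv v t))
    (by
      intro t ht
      rw [Set.uIoc_of_le hab.le] at ht
      rw [Real.norm_eq_abs]
      exact hpt t (Set.mem_Icc_of_Ioc ht))
  refine le_trans hle ?_
  rw [abs_of_pos hba]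
  rw [div_mul_eq_mul_div, div_mul_eq_mul_div, div_le_iff₀ hba]

/-- Proposition 3.1 and its corollary: if `M` is an infimizer of `J̄`
containing a `ζ`-solution `y_ζ`, then `φ_{ζ,M}(v) = inf_{y∈M} ζ·J(y+v)` is Fréchet
differentiable at `0` (w.r.t. the `C¹` norm on `C¹₀([a,b];ℝⁿ)`), its derivative is
`v ↦ ∫_a^b [D_y L_ζ(t,y_ζ,ẏ_ζ)·v + D_p L_ζ(t,y_ζ,ẏ_ζ)·v̇] dt`, and this derivative is
identically zero. -/
theorem stmt19 {n d : ℕ} (a b : ℝ) (hab : a < b)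
    (A B : EuclideanSpace ℝ (Fin n))
    (L : ℝ → EuclideanSpace ℝ (Fin n) → EuclideanSpace ℝ (Fin n) → EuclideanSpace ℝ (Fin d))
    (hL : ContDiff ℝ 1 (fun x : ℝ × EuclideanSpace ℝ (Fin n) × EuclideanSpace ℝ (Fin n) =>
      L x.1 x.2.1 x.2.2))
    (C : Set (EuclideanSpace ℝ (Fin d)))
    (hCne : C.Nonempty) (hCclosed : IsClosed C) (hCconv : Convex ℝ C)
    (hCcone : ∀ c ∈ C, ∀ s : ℝ, 0 ≤ s → s • c ∈ C)
    (hCproper : C ≠ Set.univ)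
    (ζ : EuclideanSpace ℝ (Fin d))
    (hζC : ∀ c ∈ C, 0 ≤ (inner ℝ ζ c : ℝ)) (hζ0 : ζ ≠ 0)
    -- the admissible arcs 𝒳 and the space of C¹ variations vanishing at the endpoints
    (𝒳 X0 : Set (ℝ → EuclideanSpace ℝ (Fin n)))
    (h𝒳 : 𝒳 = {y | ContDiff ℝ 1 y ∧ y a = A ∧ y b = B})
    (hX0 : X0 = {v | ContDiff ℝ 1 v ∧ v a = 0 ∧ v b = 0})
    -- the vector functional J, its extension scalarization J_ζ
    (J : (ℝ → EuclideanSpace ℝ (Fin n)) → EuclideanSpace ℝ (Fin d))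
    (hJ : ∀ y, J y = ∫ t in a..b, L t (y t) (deriv y t))
    (Jζ : (ℝ → EuclideanSpace ℝ (Fin n)) → ℝ)
    (hJζ : ∀ y, Jζ y = (inner ℝ ζ (J y) : ℝ))
    -- M is an infimizer containing a ζ-solution y_ζ
    (M : Set (ℝ → EuclideanSpace ℝ (Fin n))) (hM : M ⊆ 𝒳)
    (hinf : closure (⋃ y ∈ M, ({J y} + C)) = closure (⋃ y ∈ 𝒳, ({J y} + C)))
    (yζ : ℝ → EuclideanSpace ℝ (Fin n)) (hyζM : yζ ∈ M)
    (hyζmin : ∀ y ∈ 𝒳, Jζ yζ ≤ Jζ y)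
    -- the scalarized inf-translation φ_{ζ,M}, the C¹ norm and the candidate derivative D
    (φ : (ℝ → EuclideanSpace ℝ (Fin n)) → ℝ)
    (hφ : ∀ v, φ v = sInf {r : ℝ | ∃ y ∈ M, r = Jζ (y + v)})
    (normC1 : (ℝ → EuclideanSpace ℝ (Fin n)) → ℝ)
    (hnormC1 : ∀ v, normC1 v = sSup {r : ℝ | ∃ t ∈ Set.Icc a b, r = ‖v t‖} +
      sSup {r : ℝ | ∃ t ∈ Set.Icc a b, r = ‖deriv v t‖})
    (D : (ℝ → EuclideanSpace ℝ (Fin n)) → ℝ)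
    (hD : ∀ v, D v = ∫ t in a..b,
      (fderiv ℝ (fun y' => (inner ℝ ζ (L t y' (deriv yζ t)) : ℝ)) (yζ t) (v t) +
        fderiv ℝ (fun p' => (inner ℝ ζ (L t (yζ t) p') : ℝ)) (deriv yζ t) (deriv v t))) :
    (∀ ε > 0, ∃ δ > 0, ∀ v ∈ X0, normC1 v < δ →
      |φ v - φ 0 - D v| ≤ ε * normC1 v) ∧
    (∀ v ∈ X0, D v = 0) := by
  classical
  have hF : ContDiff ℝ 1 (fun x : ℝ × EuclideanSpace ℝ (Fin n) × EuclideanSpace ℝ (Fin n) =>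
      (inner ℝ ζ (L x.1 x.2.1 x.2.2) : ℝ)) := ContDiff.inner ℝ contDiff_const hL
  have hyζX := hM hyζM
  rw [h𝒳] at hyζX
  obtain ⟨hyζC, hyζa, hyζb⟩ := hyζX
  -- deriv of a sum of C¹ functions
  have hderadd : ∀ u w : ℝ → EuclideanSpace ℝ (Fin n), ContDiff ℝ 1 u → ContDiff ℝ 1 w →
      ∀ t, deriv (u + w) t = deriv u t + deriv w t := by
    intro u w hu hw t
    exact deriv_add (hu.differentiable one_ne_zero t) (hw.differentiable one_ne_zero t)
  -- addition stays admissible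
  have hadd𝒳 : ∀ y ∈ M, ∀ v ∈ X0, y + v ∈ 𝒳 := by
    intro y hy v hv
    have hy' := hM hy
    rw [h𝒳] at hy' ⊢
    rw [hX0] at hv
    exact ⟨hy'.1.add hv.1, by simp [Pi.add_apply, hy'.2.1, hv.2.1],
      by simp [Pi.add_apply, hy'.2.2, hv.2.2]⟩
  -- scalarized functional as an integral
  have hJζint : ∀ y : ℝ → EuclideanSpace ℝ (Fin n), ContDiff ℝ 1 y →
      Jζ y = ∫ t in a..b, (inner ℝ ζ (L t (y t) (deriv y t)) : ℝ) := by
    intro y hy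
    rw [hJζ, hJ]
    have hcont : Continuous fun t => L t (y t) (deriv y t) :=
      hL.continuous.comp (continuous_id.prodMk (hy.continuous.prodMk
        (hy.continuous_deriv le_rfl)))
    calc (inner ℝ ζ (∫ t in a..b, L t (y t) (deriv y t)) : ℝ)
        = (innerSL ℝ ζ) (∫ t in a..b, L t (y t) (deriv y t)) := (innerSL_apply_apply ℝ ζ _).symm
      _ = ∫ t in a..b, (innerSL ℝ ζ) (L t (y t) (deriv y t)) :=
          (ContinuousLinearMap.intervalIntegral_comp_comm _
            (hcont.intervalIntegrable a b)).symm
      _ = ∫ t in a..b, (inner ℝ ζ (L t (y t) (deriv y t)) : ℝ) := by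
          simp only [innerSL_apply_apply]
  -- D in terms of the full fderiv
  have hDv : ∀ v : ℝ → EuclideanSpace ℝ (Fin n), ContDiff ℝ 1 v →
      D v = ∫ t in a..b, (fderiv ℝ
        (fun x : ℝ × EuclideanSpace ℝ (Fin n) × EuclideanSpace ℝ (Fin n) =>
          (inner ℝ ζ (L x.1 x.2.1 x.2.2) : ℝ)) (t, yζ t, deriv yζ t)) (0, v t, deriv v t) := by
    intro v hv
    rw [hD]
    congr 1
    funext t
    have h1 : fderiv ℝ (fun y' => (inner ℝ ζ (L t y' (deriv yζ t)) : ℝ)) (yζ t) (v t)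
        = fderiv ℝ (fun x : ℝ × EuclideanSpace ℝ (Fin n) × EuclideanSpace ℝ (Fin n) =>
          (inner ℝ ζ (L x.1 x.2.1 x.2.2) : ℝ)) (t, yζ t, deriv yζ t) (0, v t, 0) :=
      partial_fderiv_left _ (hF.differentiable one_ne_zero) t (yζ t) (deriv yζ t) (v t)
    have h2 : fderiv ℝ (fun p' => (inner ℝ ζ (L t (yζ t) p') : ℝ)) (deriv yζ t) (deriv v t)
        = fderiv ℝ (fun x : ℝ × EuclideanSpace ℝ (Fin n) × EuclideanSpace ℝ (Fin n) =>
          (inner ℝ ζ (L x.1 x.2.1 x.2.2) : ℝ)) (t, yζ t, deriv yζ t) (0, 0, deriv v t) :=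
      partial_fderiv_right _ (hF.differentiable one_ne_zero) t (yζ t) (deriv yζ t) (deriv v t)
    rw [h1, h2, ← map_add]
    congr 1
    simp [Prod.ext_iff]
  -- normC1 basic facts
  have hnf : ∀ v : ℝ → EuclideanSpace ℝ (Fin n), ContDiff ℝ 1 v →
      (∀ t ∈ Set.Icc a b, ‖v t‖ ≤ normC1 v ∧ ‖deriv v t‖ ≤ normC1 v) ∧ 0 ≤ normC1 v := by
    intro v hv
    have hvc : Continuous v := hv.continuous
    have hv'c : Continuous (deriv v) := hv.continuous_deriv le_rfl
    have h1set : {r : ℝ | ∃ t ∈ Set.Icc a b, r = ‖v t‖} = (fun t => ‖v t‖) '' Set.Icc a b := by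
      ext r
      constructor
      · rintro ⟨t, ht, rfl⟩; exact ⟨t, ht, rfl⟩
      · rintro ⟨t, ht, rfl⟩; exact ⟨t, ht, rfl⟩
    have h2set : {r : ℝ | ∃ t ∈ Set.Icc a b, r = ‖deriv v t‖}
        = (fun t => ‖deriv v t‖) '' Set.Icc a b := by
      ext r
      constructor
      · rintro ⟨t, ht, rfl⟩; exact ⟨t, ht, rfl⟩
      · rintro ⟨t, ht, rfl⟩; exact ⟨t, ht, rfl⟩
    have hb1 : BddAbove {r : ℝ | ∃ t ∈ Set.Icc a b, r = ‖v t‖} :=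
      h1set ▸ (isCompact_Icc.image hvc.norm).bddAbove
    have hb2 : BddAbove {r : ℝ | ∃ t ∈ Set.Icc a b, r = ‖deriv v t‖} :=
      h2set ▸ (isCompact_Icc.image hv'c.norm).bddAbove
    have hle1 : ∀ t ∈ Set.Icc a b, ‖v t‖ ≤ sSup {r : ℝ | ∃ t ∈ Set.Icc a b, r = ‖v t‖} :=
      fun t ht => le_csSup hb1 ⟨t, ht, rfl⟩
    have hle2 : ∀ t ∈ Set.Icc a b,
        ‖deriv v t‖ ≤ sSup {r : ℝ | ∃ t ∈ Set.Icc a b, r = ‖deriv v t‖} :=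
      fun t ht => le_csSup hb2 ⟨t, ht, rfl⟩
    have h1nn : 0 ≤ sSup {r : ℝ | ∃ t ∈ Set.Icc a b, r = ‖v t‖} :=
      le_trans (norm_nonneg _) (hle1 a ⟨le_rfl, hab.le⟩)
    have h2nn : 0 ≤ sSup {r : ℝ | ∃ t ∈ Set.Icc a b, r = ‖deriv v t‖} :=
      le_trans (norm_nonneg _) (hle2 a ⟨le_rfl, hab.le⟩)
    rw [hnormC1]
    exact ⟨fun t ht => ⟨by linarith [hle1 t ht], by linarith [hle2 t ht]⟩, by linarith⟩
  -- the central estimate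
  have core : ∀ ε > 0, ∃ δ > 0, ∀ v ∈ X0, normC1 v < δ →
      |Jζ (yζ + v) - Jζ yζ - D v| ≤ ε * normC1 v := by
    intro ε hε
    obtain ⟨δ, hδ, hest⟩ := keyEst a b hab
      (fun x : ℝ × EuclideanSpace ℝ (Fin n) × EuclideanSpace ℝ (Fin n) =>
        (inner ℝ ζ (L x.1 x.2.1 x.2.2) : ℝ)) hF yζ hyζC ε hε
    refine ⟨δ, hδ, ?_⟩
    intro v hv hvδ
    have hv' := hv
    rw [hX0] at hv'
    obtain ⟨hvC, hva, hvb⟩ := hv'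
    have e1 : Jζ (yζ + v)
        = ∫ t in a..b, (inner ℝ ζ (L t (yζ t + v t) (deriv yζ t + deriv v t)) : ℝ) := by
      rw [hJζint (yζ + v) (hyζC.add hvC)]
      congr 1
      funext t
      rw [hderadd yζ v hyζC hvC t]
      simp only [Pi.add_apply]
    rw [e1, hJζint yζ hyζC, hDv v hvC]
    exact hest v hvC (normC1 v) hvδ (hnf v hvC).1
  -- D vanishes on X0
  have hD0 : ∀ v ∈ X0, D v = 0 := by
    intro v hv
    have hv' := hv
    rw [hX0] at hv'
    obtain ⟨hvC, hva, hvb⟩ := hv'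
    have hsmulX0 : ∀ s : ℝ, s • v ∈ X0 := by
      intro s
      rw [hX0]
      refine ⟨hvC.const_smul s, ?_, ?_⟩
      · show s • v a = 0
        rw [hva, smul_zero]
      · show s • v b = 0
        rw [hvb, smul_zero]
    have hdsv : ∀ s : ℝ, ∀ t, deriv (s • v) t = s • deriv v t := by
      intro s t
      exact deriv_const_smul s (hvC.differentiable one_ne_zero t)
    have hDsmul : ∀ s : ℝ, D (s • v) = s • D v := by
      intro s
      rw [hDv (s • v) (hvC.const_smul s), hDv v hvC, ← intervalIntegral.integral_smul]
      congr 1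
      funext t
      rw [hdsv s t]
      have hpr : (((0 : ℝ), (s • v) t, s • deriv v t) :
          ℝ × EuclideanSpace ℝ (Fin n) × EuclideanSpace ℝ (Fin n))
          = s • (((0 : ℝ), v t, deriv v t) :
            ℝ × EuclideanSpace ℝ (Fin n) × EuclideanSpace ℝ (Fin n)) := by
        simp [Prod.ext_iff]
      rw [hpr]
      exact ContinuousLinearMap.map_smul _ s _
    have hNsmul : ∀ s : ℝ, normC1 (s • v) = |s| * normC1 v := by
      intro s
      rw [hnormC1, hnormC1, mul_add]
      have hvc : Continuous v := hvC.continuous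
      have hv'c : Continuous (deriv v) := hvC.continuous_deriv le_rfl
      have hb1 : BddAbove {r : ℝ | ∃ t ∈ Set.Icc a b, r = ‖v t‖} := by
        have h1set : {r : ℝ | ∃ t ∈ Set.Icc a b, r = ‖v t‖}
            = (fun t => ‖v t‖) '' Set.Icc a b := by
          ext r
          constructor
          · rintro ⟨t, ht, rfl⟩; exact ⟨t, ht, rfl⟩
          · rintro ⟨t, ht, rfl⟩; exact ⟨t, ht, rfl⟩
        exact h1set ▸ (isCompact_Icc.image hvc.norm).bddAbove
      have hb2 : BddAbove {r : ℝ | ∃ t ∈ Set.Icc a b, r = ‖deriv v t‖} := by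
        have h2set : {r : ℝ | ∃ t ∈ Set.Icc a b, r = ‖deriv v t‖}
            = (fun t => ‖deriv v t‖) '' Set.Icc a b := by
          ext r
          constructor
          · rintro ⟨t, ht, rfl⟩; exact ⟨t, ht, rfl⟩
          · rintro ⟨t, ht, rfl⟩; exact ⟨t, ht, rfl⟩
        exact h2set ▸ (isCompact_Icc.image hv'c.norm).bddAbove
      have himg1 : {r : ℝ | ∃ t ∈ Set.Icc a b, r = ‖(s • v) t‖}
          = (fun r => |s| * r) '' {r : ℝ | ∃ t ∈ Set.Icc a b, r = ‖v t‖} := by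
        ext r
        constructor
        · rintro ⟨t, ht, rfl⟩
          exact ⟨‖v t‖, ⟨t, ht, rfl⟩, by
            rw [Pi.smul_apply, norm_smul, Real.norm_eq_abs]⟩
        · rintro ⟨r', ⟨t, ht, rfl⟩, rfl⟩
          exact ⟨t, ht, by rw [Pi.smul_apply, norm_smul, Real.norm_eq_abs]⟩
      have himg2 : {r : ℝ | ∃ t ∈ Set.Icc a b, r = ‖deriv (s • v) t‖}
          = (fun r => |s| * r) '' {r : ℝ | ∃ t ∈ Set.Icc a b, r = ‖deriv v t‖} := by
        ext r
        constructor
        · rintro ⟨t, ht, rfl⟩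
          exact ⟨‖deriv v t‖, ⟨t, ht, rfl⟩, by
            rw [hdsv s t, norm_smul, Real.norm_eq_abs]⟩
        · rintro ⟨r', ⟨t, ht, rfl⟩, rfl⟩
          exact ⟨t, ht, by rw [hdsv s t, norm_smul, Real.norm_eq_abs]⟩
      have hmono : Monotone fun r : ℝ => |s| * r := monotone_mul_left_of_nonneg (abs_nonneg s)
      have hcont : ContinuousAt (fun r : ℝ => |s| * r)
          (sSup {r : ℝ | ∃ t ∈ Set.Icc a b, r = ‖v t‖}) :=
        (continuous_const.mul continuous_id).continuousAt
      have hcont2 : ContinuousAt (fun r : ℝ => |s| * r)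
          (sSup {r : ℝ | ∃ t ∈ Set.Icc a b, r = ‖deriv v t‖}) :=
        (continuous_const.mul continuous_id).continuousAt
      rw [himg1, himg2,
        ← Monotone.map_csSup_of_continuousAt hcont hmono ⟨‖v a‖, a, ⟨le_rfl, hab.le⟩, rfl⟩ hb1,
        ← Monotone.map_csSup_of_continuousAt hcont2 hmono
          ⟨‖deriv v a‖, a, ⟨le_rfl, hab.le⟩, rfl⟩ hb2]
    have hNv : 0 ≤ normC1 v := (hnf v hvC).2
    -- g has a local min at 0 and derivative D v there
    have hg0 : Jζ (yζ + (0 : ℝ) • v) = Jζ yζ := by rw [zero_smul, add_zero]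
    have hgd : HasDerivAt (fun s : ℝ => Jζ (yζ + s • v)) (D v) 0 := by
      rw [hasDerivAt_iff_isLittleO, Asymptotics.isLittleO_iff]
      intro c hc
      obtain ⟨δ, hδ, hest⟩ := core (c / (normC1 v + 1)) (by positivity)
      rw [Metric.eventually_nhds_iff]
      refine ⟨δ / (normC1 v + 1), by positivity, ?_⟩
      intro s hs
      rw [Real.dist_eq, sub_zero] at hs
      have hsN : normC1 (s • v) < δ := by
        rw [hNsmul s]
        calc |s| * normC1 v ≤ |s| * (normC1 v + 1) :=
              mul_le_mul_of_nonneg_left (by linarith) (abs_nonneg s)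
          _ < δ := (lt_div_iff₀ (by positivity)).1 hs
      have hb := hest (s • v) (hsmulX0 s) hsN
      simp only [sub_zero]
      rw [hg0, Real.norm_eq_abs, Real.norm_eq_abs]
      have hsD : s • D v = D (s • v) := (hDsmul s).symm
      rw [hsD]
      calc |Jζ (yζ + s • v) - Jζ yζ - D (s • v)|
          ≤ (c / (normC1 v + 1)) * (|s| * normC1 v) := by rw [← hNsmul s]; exact hb
        _ ≤ c * |s| := by
            rw [div_mul_eq_mul_div, div_le_iff₀ (by positivity)]
            nlinarith [mul_nonneg hc.le (abs_nonneg s)]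
    have hmin : IsLocalMin (fun s : ℝ => Jζ (yζ + s • v)) 0 := by
      apply Filter.Eventually.of_forall
      intro s
      show Jζ (yζ + (0:ℝ) • v) ≤ Jζ (yζ + s • v)
      rw [hg0]
      exact hyζmin _ (hadd𝒳 yζ hyζM (s • v) (hsmulX0 s))
    exact hmin.hasDerivAt_eq_zero hgd
  refine ⟨?_, hD0⟩
  intro ε hε
  obtain ⟨δ, hδ, hest⟩ := core ε hε
  refine ⟨δ, hδ, ?_⟩
  intro v hv hvδ
  have hv' := hv
  rw [hX0] at hv'
  obtain ⟨hvC, hva, hvb⟩ := hv'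
  have hφ0 : φ 0 = Jζ yζ := by
    rw [hφ]
    have hset : {r : ℝ | ∃ y ∈ M, r = Jζ (y + 0)} = {r : ℝ | ∃ y ∈ M, r = Jζ y} := by
      ext r
      constructor
      · rintro ⟨y, hy, rfl⟩; exact ⟨y, hy, by rw [add_zero]⟩
      · rintro ⟨y, hy, rfl⟩; exact ⟨y, hy, by rw [add_zero]⟩
    rw [hset]
    apply le_antisymm
    · exact csInf_le ⟨Jζ yζ, by rintro r ⟨y, hy, rfl⟩; exact hyζmin y (hM hy)⟩ ⟨yζ, hyζM, rfl⟩
    · exact le_csInf ⟨Jζ yζ, yζ, hyζM, rfl⟩ (by rintro r ⟨y, hy, rfl⟩; exact hyζmin y (hM hy))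
  have hlb : ∀ r ∈ {r : ℝ | ∃ y ∈ M, r = Jζ (y + v)}, Jζ yζ ≤ r := by
    rintro r ⟨y, hy, rfl⟩
    exact hyζmin _ (hadd𝒳 y hy v hv)
  have h1 : φ 0 ≤ φ v := by
    rw [hφ0, hφ]
    exact le_csInf ⟨Jζ (yζ + v), yζ, hyζM, rfl⟩ hlb
  have h2 : φ v ≤ Jζ (yζ + v) := by
    rw [hφ]
    exact csInf_le ⟨Jζ yζ, hlb⟩ ⟨yζ, hyζM, rfl⟩
  have h3 := hest v hv hvδ
  have hD0v := hD0 v hv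
  rw [hD0v, sub_zero] at h3 ⊢
  rw [abs_of_nonneg (by linarith)]
  have h4 : Jζ (yζ + v) - Jζ yζ ≤ |Jζ (yζ + v) - Jζ yζ| := le_abs_self _
  linarith
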